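/- Let I be a monomial ideal generated by monomials all of the same degree, and suppose I has linear quotients. Then for any monomial m, the ideal I^{≤m}, generated by all minimal monomial generators of I that divide m, also has linear quotients. -/

import Mathlib

/-- The successive-colon (linear quotients) condition for a given ordering of the
minimal generators (monomials, encoded as multisets of variable indices) of a
monomial ideal generated in a single degree: for all `i < j` there is `p < j`
with `(m_p : m_j)` generated by a single variable `v` dividing `m_i/gcd(m_i,m_j)`. -/
def MLQList (L : List (Multiset ℕ)) : Prop :=
  ∀ i j : Fin L.length, i < j →
    ∃ p : Fin L.length, p < j ∧ ∃ v : ℕ,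
      L.get p - L.get j = {v} ∧ v ∈ L.get i - L.get j

/-- A set of monomials (generators of an equigenerated monomial ideal) has linear
quotients: some linear order of the generators works. -/
def MHasLQ (S : Set (Multiset ℕ)) : Prop :=
  ∃ L : List (Multiset ℕ), L.Nodup ∧ (∀ u, u ∈ L ↔ u ∈ S) ∧ MLQList L

/-- `g >_lex f` for monomials with variable order `x₁ > x₂ > ⋯`. -/
def mlexGt (g f : Multiset ℕ) : Prop :=
  List.Lex (· < ·) (g.sort (· ≤ ·)) (f.sort (· ≤ ·))

/-- Key multiset lemma: if `A - B = {v}`, `v ∈ C - B`, and `B, C ≤ m`, then `A ≤ m`. -/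
lemma aux_le (A B C m : Multiset ℕ) (v : ℕ) (hAB : A - B = {v}) (hv : v ∈ C - B)
    (hB : B ≤ m) (hC : C ≤ m) : A ≤ m := by
  rw [Multiset.le_iff_count]
  intro x
  have hcv : 0 < C.count v - B.count v := by
    rw [← Multiset.count_sub]
    exact Multiset.count_pos.mpr hv
  have hBm := Multiset.le_iff_count.mp hB x
  have hCm := Multiset.le_iff_count.mp hC v
  have hBmv := Multiset.le_iff_count.mp hB v
  by_cases hx : x = v
  · subst hx
    have h1 : A.count x - B.count x = 1 := by
      rw [← Multiset.count_sub, hAB, Multiset.count_singleton_self]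
    omega
  · have h0 : A.count x - B.count x = 0 := by
      rw [← Multiset.count_sub, hAB, Multiset.count_singleton, if_neg hx]
    omega

/-- If a monomial ideal generated in a single degree has linear
quotients, then so does its restriction `I^{≤m}` to the generators dividing a
monomial `m`. -/
theorem LQ_restriction (S : Set (Multiset ℕ)) (d : ℕ)
    (hdeg : ∀ u ∈ S, Multiset.card u = d) (h : MHasLQ S) (m : Multiset ℕ) :
    MHasLQ {u | u ∈ S ∧ u ≤ m} := by
  obtain ⟨L, hnd, hmem, hlq⟩ := h
  refine ⟨L.filter (fun u => decide (u ≤ m)), hnd.filter _, ?_, ?_⟩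
  · intro u
    simp only [List.mem_filter, decide_eq_true_eq, Set.mem_setOf_eq, hmem]
  · set L' := L.filter (fun u => decide (u ≤ m)) with hL'
    have hsub : List.Sublist L' L := List.filter_sublist
    obtain ⟨f, hf⟩ := List.sublist_iff_exists_fin_orderEmbedding_get_eq.mp hsub
    have hle : ∀ i : Fin L'.length, L'.get i ≤ m := by
      intro i
      have : L'.get i ∈ L' := L'.get_mem _
      simp only [hL', List.mem_filter, decide_eq_true_eq] at this
      exact this.2
    intro i j hij
    obtain ⟨p, hpj, v, hpv, hvi⟩ := hlq (f i) (f j) (f.lt_iff_lt.mpr hij)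
    have hpm : L.get p ≤ m :=
      aux_le _ (L.get (f j)) (L.get (f i)) m v hpv hvi (hf j ▸ hle j) (hf i ▸ hle i)
    have hpL' : L.get p ∈ L' := by
      simp only [hL', List.mem_filter, decide_eq_true_eq]
      exact ⟨L.get_mem _, hpm⟩
    obtain ⟨p', hp'⟩ := List.get_of_mem hpL'
    have hfp' : f p' = p := by
      have hgp : L.get (f p') = L.get p := by rw [← hf, hp']
      exact (hnd.get_inj_iff).mp hgp
    refine ⟨p', ?_, v, ?_, ?_⟩
    · rw [← f.lt_iff_lt, hfp']; exact hpj
    · rw [hf p', hfp', hf j]; exact hpv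
    · rw [hf i, hf j]; exact hvi
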